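/- A symmetric n×n matrix A over K satisfies N_λ·A + A·N_λᵀ = 0 if and only if for every pair 1 ≤ r ≤ s ≤ k there exist scalars c^{r,s}_1, c^{r,s}_2, ... ∈ K such that the (s_r + p, s_s + q) entry of A (for 1 ≤ p ≤ λ_r, 1 ≤ q ≤ λ_s) equals: when r = s, (−1)^{p−1}·c^{r,r}_{(p+q)/2} if p+q is even and p+q ≤ λ_r + 1, and 0 otherwise; when r < s, (−1)^{p−1}·c^{r,s}_{p+q−1} if p+q−1 ≤ λ_s, and 0 otherwise. (The entries with r > s are determined by symmetry of A.) -/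

import Mathlib

open Matrix

/-- Partial sum `s_r = λ_1 + ⋯ + λ_{r-1}` (where the parts are `lam 0, lam 1, …`). -/
def psum {k : ℕ} (lam : Fin k → ℕ) (r : Fin k) : ℕ :=
  ∑ t ∈ Finset.univ.filter (fun t => t < r), lam t

/-- The `n × n` nilpotent Jordan matrix of type `λ`: its 1-indexed `(i, j)` entry is `1`
if `j = i + 1` and `s_r < i < i + 1 ≤ s_r + λ_r` for some `r`, and `0` otherwise
(here written with 0-indexed `i`, `j`). -/
def jordanNilpotent (K : Type*) [Field K] (n k : ℕ) (lam : Fin k → ℕ) :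
    Matrix (Fin n) (Fin n) K :=
  Matrix.of fun i j =>
    if (j : ℕ) = (i : ℕ) + 1 ∧
        ∃ r : Fin k, psum lam r ≤ (i : ℕ) ∧ (i : ℕ) + 2 ≤ psum lam r + lam r
      then 1 else 0

theorem psum_add_lt {n k : ℕ} (lam : Fin k → ℕ) (hn : ∑ r, lam r = n) (r : Fin k)
    (p : ℕ) (hp : p < lam r) : psum lam r + p < n := by
  have h1 : lam r + psum lam r ≤ ∑ t, lam t := by
    rw [psum, ← Finset.sum_insert (by simp)]
    exact Finset.sum_le_sum_of_subset (Finset.subset_univ _)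
  omega

/-- The index in `Fin n` of the `p`-th position (0-indexed) of the `r`-th block. -/
def blockIdx {n k : ℕ} (lam : Fin k → ℕ) (hn : ∑ r, lam r = n) (r : Fin k) (p : ℕ)
    (hp : p < lam r) : Fin n :=
  ⟨psum lam r + p, psum_add_lt lam hn r p hp⟩

lemma psum_add_le' {k : ℕ} (lam : Fin k → ℕ) {r s : Fin k} (h : r < s) :
    psum lam r + lam r ≤ psum lam s := by
  have hsub : insert r (Finset.univ.filter (fun t => t < r)) ⊆
      Finset.univ.filter (fun t => t < s) := by
    intro t ht
    simp only [Finset.mem_insert, Finset.mem_filter, Finset.mem_univ, true_and] at ht ⊢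
    rcases ht with rfl | ht
    · exact h
    · exact lt_trans ht h
  calc psum lam r + lam r = ∑ t ∈ insert r (Finset.univ.filter (fun t => t < r)), lam t := by
        rw [Finset.sum_insert (by simp), psum]; ring
    _ ≤ _ := Finset.sum_le_sum_of_subset hsub

lemma block_unique' {k : ℕ} (lam : Fin k → ℕ) {r r' : Fin k} {m : ℕ}
    (h1 : psum lam r ≤ m) (h2 : m < psum lam r + lam r)
    (h1' : psum lam r' ≤ m) (h2' : m < psum lam r' + lam r') : r = r' := by
  rcases lt_trichotomy r r' with h | h | h
  · have := psum_add_le' lam h; omega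
  · exact h
  · have := psum_add_le' lam h; omega

lemma exists_block' {n k : ℕ} (lam : Fin k → ℕ) (hn : ∑ r, lam r = n) (i : Fin n) :
    ∃ r : Fin k, ∃ p : ℕ, ∃ hp : p < lam r, (i : ℕ) = psum lam r + p := by
  have hn0 : 0 < n := i.pos
  have hk : 0 < k := by
    rcases Nat.eq_zero_or_pos k with hk | hk
    · subst hk; simp at hn; omega
    · exact hk
  set T : Finset (Fin k) := Finset.univ.filter (fun r => psum lam r ≤ (i : ℕ)) with hT
  have hTne : T.Nonempty := by
    refine ⟨⟨0, hk⟩, ?_⟩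
    simp only [hT, Finset.mem_filter, Finset.mem_univ, true_and]
    have he : (Finset.univ.filter (fun t => t < (⟨0, hk⟩ : Fin k))) = ∅ := by
      ext t; simp [Fin.lt_def]
    rw [psum, he, Finset.sum_empty]
    omega
  set r := T.max' hTne with hr
  have hrmem : r ∈ T := T.max'_mem hTne
  have hle : psum lam r ≤ (i : ℕ) := by simpa [hT] using hrmem
  have hlt : (i : ℕ) < psum lam r + lam r := by
    by_contra h
    push_neg at h
    rcases Nat.lt_or_ge ((r : ℕ) + 1) k with hr1 | hr1
    · set r' : Fin k := ⟨(r : ℕ) + 1, hr1⟩ with hr'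
      have hsucc : psum lam r' = psum lam r + lam r := by
        rw [psum, psum]
        rw [show (Finset.univ.filter (fun t => t < r')) =
            insert r (Finset.univ.filter (fun t => t < r)) from ?_]
        · rw [Finset.sum_insert (by simp)]; ring
        · ext t
          simp only [Finset.mem_insert, Finset.mem_filter, Finset.mem_univ, true_and,
            Fin.lt_def, hr']
          constructor
          · intro ht
            rcases Nat.lt_or_ge (t : ℕ) (r : ℕ) with h' | h'
            · exact Or.inr h'
            · left; exact Fin.ext (by omega)
          · rintro (rfl | ht) <;> omega
      have hmem' : r' ∈ T := by
        simp only [hT, Finset.mem_filter, Finset.mem_univ, true_and, hsucc]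
        omega
      have h2 := T.le_max' r' hmem'
      rw [← hr] at h2
      have h3 : (r' : ℕ) ≤ (r : ℕ) := h2
      simp [hr'] at h3
    · have huniv : insert r (Finset.univ.filter (fun t => t < r)) = Finset.univ := by
        ext t
        simp only [Finset.mem_insert, Finset.mem_filter, Finset.mem_univ, true_and, iff_true,
          Fin.lt_def]
        have ht := t.2
        rcases Nat.lt_or_ge (t : ℕ) (r : ℕ) with h' | h'
        · exact Or.inr h'
        · left; exact Fin.ext (by omega)
      have : psum lam r + lam r = n := by
        rw [← hn, ← huniv, Finset.sum_insert (by simp), psum]; ring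
      omega
  exact ⟨r, (i : ℕ) - psum lam r, by omega, by omega⟩

/-- condition that position m has a successor within its block -/
def JCond {k : ℕ} (lam : Fin k → ℕ) (m : ℕ) : Prop :=
  ∃ r : Fin k, psum lam r ≤ m ∧ m + 2 ≤ psum lam r + lam r

instance {k : ℕ} (lam : Fin k → ℕ) (m : ℕ) : Decidable (JCond lam m) := by
  unfold JCond; infer_instance

lemma jcond_lt {n k : ℕ} (lam : Fin k → ℕ) (hn : ∑ r, lam r = n) {m : ℕ}
    (h : JCond lam m) : m + 1 < n := by
  obtain ⟨r, h1, h2⟩ := h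
  have := psum_add_lt lam hn r (lam r - 1) (by omega)
  omega

lemma jcond_block {k : ℕ} (lam : Fin k → ℕ) {r : Fin k} {p : ℕ} (hp : p < lam r) :
    JCond lam (psum lam r + p) ↔ p + 1 < lam r := by
  constructor
  · rintro ⟨r', h1, h2⟩
    have hrr : r = r' := block_unique' lam (Nat.le_add_right _ _) (by omega) h1 (by omega)
    subst hrr; omega
  · intro h; exact ⟨r, Nat.le_add_right _ _, by omega⟩

lemma entry_eq {K : Type*} [Field K] {n k : ℕ} (lam : Fin k → ℕ) (hn : ∑ r, lam r = n)
    (A : Matrix (Fin n) (Fin n) K) (i j : Fin n) :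
    (jordanNilpotent K n k lam * A + A * (jordanNilpotent K n k lam)ᵀ) i j =
      (if h : JCond lam (i : ℕ) then A ⟨(i : ℕ) + 1, jcond_lt lam hn h⟩ j else 0) +
      (if h : JCond lam (j : ℕ) then A i ⟨(j : ℕ) + 1, jcond_lt lam hn h⟩ else 0) := by
  have h1 : (jordanNilpotent K n k lam * A) i j =
      (if h : JCond lam (i : ℕ) then A ⟨(i : ℕ) + 1, jcond_lt lam hn h⟩ j else 0) := by
    rw [Matrix.mul_apply]
    by_cases h : JCond lam (i : ℕ)
    · rw [dif_pos h]
      rw [Finset.sum_eq_single (⟨(i : ℕ) + 1, jcond_lt lam hn h⟩ : Fin n)]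
      · rw [jordanNilpotent]
        simp only [Matrix.of_apply]
        rw [if_pos ⟨trivial, h⟩, one_mul]
      · intro l _ hl
        rw [jordanNilpotent]
        simp only [Matrix.of_apply]
        rw [if_neg, zero_mul]
        rintro ⟨hl1, -⟩
        exact hl (Fin.ext hl1)
      · intro hmem; exact absurd (Finset.mem_univ _) hmem
    · rw [dif_neg h]
      apply Finset.sum_eq_zero
      intro l _
      rw [jordanNilpotent]
      simp only [Matrix.of_apply]
      rw [if_neg, zero_mul]
      rintro ⟨-, hc⟩
      exact h hc
  have h2 : (A * (jordanNilpotent K n k lam)ᵀ) i j =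
      (if h : JCond lam (j : ℕ) then A i ⟨(j : ℕ) + 1, jcond_lt lam hn h⟩ else 0) := by
    rw [Matrix.mul_apply]
    by_cases h : JCond lam (j : ℕ)
    · rw [dif_pos h]
      rw [Finset.sum_eq_single (⟨(j : ℕ) + 1, jcond_lt lam hn h⟩ : Fin n)]
      · rw [jordanNilpotent]
        simp only [Matrix.transpose_apply, Matrix.of_apply]
        rw [if_pos ⟨trivial, h⟩, mul_one]
      · intro l _ hl
        simp only [Matrix.transpose_apply, jordanNilpotent, Matrix.of_apply]
        rw [if_neg, mul_zero]
        rintro ⟨hl1, -⟩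
        exact hl (Fin.ext hl1)
      · intro hmem; exact absurd (Finset.mem_univ _) hmem
    · rw [dif_neg h]
      apply Finset.sum_eq_zero
      intro l _
      simp only [Matrix.transpose_apply, jordanNilpotent, Matrix.of_apply]
      rw [if_neg, mul_zero]
      rintro ⟨-, hc⟩
      exact h hc
  rw [Matrix.add_apply, h1, h2]

/-- block entry with out-of-range values set to `0`. -/
def Bblk {K : Type*} [Field K] {n k : ℕ} (lam : Fin k → ℕ) (hn : ∑ r, lam r = n)
    (A : Matrix (Fin n) (Fin n) K) (r s : Fin k) (p q : ℕ) : K :=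
  if h : p < lam r ∧ q < lam s then A (blockIdx lam hn r p h.1) (blockIdx lam hn s q h.2)
  else 0

lemma Bblk_eq {K : Type*} [Field K] {n k : ℕ} (lam : Fin k → ℕ) (hn : ∑ r, lam r = n)
    (A : Matrix (Fin n) (Fin n) K) {r s : Fin k} {p q : ℕ} (hp : p < lam r) (hq : q < lam s) :
    Bblk lam hn A r s p q = A (blockIdx lam hn r p hp) (blockIdx lam hn s q hq) :=
  dif_pos ⟨hp, hq⟩

lemma Bblk_zero {K : Type*} [Field K] {n k : ℕ} (lam : Fin k → ℕ) (hn : ∑ r, lam r = n)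
    (A : Matrix (Fin n) (Fin n) K) {r s : Fin k} {p q : ℕ}
    (h : ¬(p < lam r ∧ q < lam s)) : Bblk lam hn A r s p q = 0 :=
  dif_neg h

lemma entry_eq_rec {K : Type*} [Field K] {n k : ℕ} (lam : Fin k → ℕ) (hn : ∑ r, lam r = n)
    (A : Matrix (Fin n) (Fin n) K) (r s : Fin k) (p q : ℕ) (hp : p < lam r) (hq : q < lam s) :
    (jordanNilpotent K n k lam * A + A * (jordanNilpotent K n k lam)ᵀ)
        (blockIdx lam hn r p hp) (blockIdx lam hn s q hq) =
      Bblk lam hn A r s (p + 1) q + Bblk lam hn A r s p (q + 1) := by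
  rw [entry_eq lam hn A]
  congr 1
  · by_cases h1 : p + 1 < lam r
    · rw [dif_pos (show JCond lam ((blockIdx lam hn r p hp : Fin n) : ℕ) from (jcond_block lam hp).mpr h1), Bblk_eq lam hn A h1 hq]
      exact congrFun (congrArg A (Fin.ext (by simp [blockIdx]; omega))) _
    · rw [dif_neg (show ¬ JCond lam ((blockIdx lam hn r p hp : Fin n) : ℕ) from fun hc => h1 ((jcond_block lam hp).mp hc)),
        Bblk_zero lam hn A (fun hc => h1 hc.1)]
  · by_cases h2 : q + 1 < lam s
    · rw [dif_pos (show JCond lam ((blockIdx lam hn s q hq : Fin n) : ℕ) from (jcond_block lam hq).mpr h2), Bblk_eq lam hn A hp h2]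
      exact congrArg (A _) (Fin.ext (by simp [blockIdx]; omega))
    · rw [dif_neg (show ¬ JCond lam ((blockIdx lam hn s q hq : Fin n) : ℕ) from fun hc => h2 ((jcond_block lam hq).mp hc)),
        Bblk_zero lam hn A (fun hc => h2 hc.2)]

section core
variable {K : Type*} [Field K] {n k : ℕ} (lam : Fin k → ℕ) (hn : ∑ r, lam r = n)
  (A : Matrix (Fin n) (Fin n) K)
  (hrec : ∀ r s : Fin k, ∀ p q : ℕ, p < lam r → q < lam s →
    Bblk lam hn A r s (p + 1) q + Bblk lam hn A r s p (q + 1) = 0)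

include hrec

lemma bblk_vanish : ∀ d : ℕ, ∀ r s : Fin k, ∀ p q : ℕ, p < lam r → q < lam s →
    lam s ≤ p + q → lam s - 1 - q ≤ d → Bblk lam hn A r s p q = 0 := by
  intro d
  induction d with
  | zero =>
    intro r s p q hp hq hle hd
    have hq' : q = lam s - 1 := by omega
    have hp1 : 1 ≤ p := by omega
    have h := hrec r s (p - 1) q (by omega) hq
    rw [show p - 1 + 1 = p from by omega] at h
    rw [Bblk_zero lam hn A (show ¬(p - 1 < lam r ∧ q + 1 < lam s) by omega)] at h
    linear_combination h
  | succ d ih =>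
    intro r s p q hp hq hle hd
    by_cases hq' : q = lam s - 1
    · have hp1 : 1 ≤ p := by omega
      have h := hrec r s (p - 1) q (by omega) hq
      rw [show p - 1 + 1 = p from by omega] at h
      rw [Bblk_zero lam hn A (show ¬(p - 1 < lam r ∧ q + 1 < lam s) by omega)] at h
      linear_combination h
    · have hp1 : 1 ≤ p := by omega
      have h := hrec r s (p - 1) q (by omega) hq
      rw [show p - 1 + 1 = p from by omega] at h
      rw [ih r s (p - 1) (q + 1) (by omega) (by omega) (by omega) (by omega)] at h
      linear_combination h

lemma bblk_antidiag : ∀ p : ℕ, ∀ r s : Fin k, ∀ q : ℕ, lam s ≤ lam r →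
    p + q + 1 ≤ lam s → Bblk lam hn A r s p q = (-1 : K) ^ p * Bblk lam hn A r s 0 (p + q) := by
  intro p
  induction p with
  | zero => intro r s q _ _; simp
  | succ p ih =>
    intro r s q hsr hle
    have h1 := hrec r s p q (by omega) (by omega)
    have h2 := ih r s (q + 1) hsr (by omega)
    rw [show p + (q + 1) = p + 1 + q from by omega] at h2
    have h3 : Bblk lam hn A r s (p + 1) q = - Bblk lam hn A r s p (q + 1) := by
      linear_combination h1
    rw [h3, h2, pow_succ]
    ring

end core

/-- A symmetric matrix `A` satisfies `N_λ * A + A * N_λᵀ = 0` iff its blocks have the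
explicit form of the paper: for `r ≤ s` and positions `p, q` (0-indexed) inside the
`(r, s)` block, the entry is `(-1)^p * c^{r,r}_{(p+q)/2+1}` (when `p + q` is even and
`p + q + 1 ≤ λ_r`, else `0`) on diagonal blocks, and `(-1)^p * c^{r,s}_{p+q+1}` (when
`p + q + 1 ≤ λ_s`, else `0`) on off-diagonal blocks; entries with `r > s` are determined
by symmetry. -/
theorem jordan_fixed_form (K : Type*) [Field K] [CharZero K] (n k : ℕ)
    (lam : Fin k → ℕ) (hpos : ∀ r, 1 ≤ lam r) (hmono : Antitone lam)
    (hn : ∑ r, lam r = n) (A : Matrix (Fin n) (Fin n) K) (hA : A.IsSymm) :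
    jordanNilpotent K n k lam * A + A * (jordanNilpotent K n k lam)ᵀ = 0 ↔
      ∃ c : Fin k → Fin k → ℕ → K, ∀ r s : Fin k, r ≤ s →
        ∀ p q : ℕ, ∀ hp : p < lam r, ∀ hq : q < lam s,
          A (blockIdx lam hn r p hp) (blockIdx lam hn s q hq) =
            if r = s then
              (if Even (p + q) ∧ p + q + 1 ≤ lam r then
                (-1 : K) ^ p * c r r ((p + q) / 2 + 1) else 0)
            else
              (if p + q + 1 ≤ lam s then (-1 : K) ^ p * c r s (p + q + 1) else 0) := by
  constructor
  · intro heq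
    have hrec : ∀ r s : Fin k, ∀ p q : ℕ, p < lam r → q < lam s →
        Bblk lam hn A r s (p + 1) q + Bblk lam hn A r s p (q + 1) = 0 := by
      intro r s p q hp hq
      have h0 := congrFun (congrFun heq (blockIdx lam hn r p hp)) (blockIdx lam hn s q hq)
      rw [entry_eq_rec lam hn A r s p q hp hq] at h0
      simpa using h0
    have hV := bblk_vanish lam hn A hrec
    have hD := bblk_antidiag lam hn A hrec
    have hOdd : ∀ r : Fin k, ∀ m : ℕ, ¬ Even m → m < lam r → Bblk lam hn A r r 0 m = 0 := by
      intro r m hm hmlt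
      have hsym : Bblk lam hn A r r m 0 = Bblk lam hn A r r 0 m := by
        rw [Bblk_eq lam hn A hmlt (hpos r), Bblk_eq lam hn A (hpos r) hmlt]
        exact hA.apply _ _
      have h2 := hD m r r 0 le_rfl (by omega)
      rw [hsym, Nat.add_zero] at h2
      have hneg : ((-1 : K)) ^ m = -1 := Odd.neg_one_pow (Nat.not_even_iff_odd.mp hm)
      rw [hneg] at h2
      have h4 : (2 : K) * Bblk lam hn A r r 0 m = 0 := by linear_combination h2
      rcases mul_eq_zero.mp h4 with h | h
      · exact absurd h two_ne_zero
      · exact h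
    refine ⟨fun r s m => if r = s then Bblk lam hn A r r 0 (2 * m - 2)
      else Bblk lam hn A r s 0 (m - 1), ?_⟩
    intro r s hrs p q hp hq
    beta_reduce
    by_cases hd : r = s
    · subst hd
      rw [if_pos rfl]
      by_cases hc : Even (p + q) ∧ p + q + 1 ≤ lam r
      · rw [if_pos hc, if_pos rfl]
        obtain ⟨t, ht⟩ := hc.1
        rw [show 2 * ((p + q) / 2 + 1) - 2 = p + q from by omega]
        have h1 := hD p r r q le_rfl hc.2
        rw [Bblk_eq lam hn A hp hq] at h1
        exact h1
      · rw [if_neg hc]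
        push_neg at hc
        by_cases hle : p + q + 1 ≤ lam r
        · have hodd : ¬ Even (p + q) := fun h => absurd hle (by simpa using (hc h).not_ge)
          have h1 := hD p r r q le_rfl hle
          rw [hOdd r (p + q) hodd (by omega), mul_zero, Bblk_eq lam hn A hp hq] at h1
          exact h1
        · have h1 := hV (lam r) r r p q hp hq (by omega) (by omega)
          rw [Bblk_eq lam hn A hp hq] at h1
          exact h1
    · rw [if_neg hd]
      have hsr : lam s ≤ lam r := hmono hrs
      by_cases hle : p + q + 1 ≤ lam s
      · rw [if_pos hle, if_neg hd]
        rw [show p + q + 1 - 1 = p + q from by omega]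
        have h1 := hD p r s q hsr hle
        rw [Bblk_eq lam hn A hp hq] at h1
        exact h1
      · rw [if_neg hle]
        have h1 := hV (lam s) r s p q hp hq (by omega) (by omega)
        rw [Bblk_eq lam hn A hp hq] at h1
        exact h1
  · rintro ⟨c, hc⟩
    have hform : ∀ r s : Fin k, ∀ p q : ℕ, Bblk lam hn A r s p q =
        if r = s then
          (if Even (p + q) ∧ p + q + 1 ≤ lam r then (-1 : K) ^ p * c r r ((p + q) / 2 + 1) else 0)
        else if r < s then
          (if p + q + 1 ≤ lam s then (-1 : K) ^ p * c r s (p + q + 1) else 0)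
        else
          (if p + q + 1 ≤ lam r then (-1 : K) ^ q * c s r (p + q + 1) else 0) := by
      intro r s p q
      by_cases hrange : p < lam r ∧ q < lam s
      · obtain ⟨hp, hq⟩ := hrange
        rw [Bblk_eq lam hn A hp hq]
        rcases lt_trichotomy r s with h | h | h
        · rw [if_neg (ne_of_lt h), if_pos h]
          have h1 := hc r s h.le p q hp hq
          rw [if_neg (ne_of_lt h)] at h1
          exact h1
        · subst h
          rw [if_pos rfl]
          have h1 := hc r r le_rfl p q hp hq
          rw [if_pos rfl] at h1
          exact h1
        · rw [if_neg (ne_of_gt h), if_neg (not_lt.mpr h.le)]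
          have hsym : A (blockIdx lam hn r p hp) (blockIdx lam hn s q hq) =
              A (blockIdx lam hn s q hq) (blockIdx lam hn r p hp) := (hA.apply _ _).symm
          rw [hsym]
          have h1 := hc s r h.le q p hq hp
          rw [if_neg (ne_of_lt h)] at h1
          rw [h1, Nat.add_comm q p]
      · rw [Bblk_zero lam hn A hrange]
        symm
        rcases lt_trichotomy r s with h | h | h
        · rw [if_neg (ne_of_lt h), if_pos h, if_neg]
          intro hle
          have hsr : lam s ≤ lam r := hmono h.le
          exact hrange ⟨by omega, by omega⟩
        · subst h
          rw [if_pos rfl, if_neg]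
          rintro ⟨-, hle⟩
          exact hrange ⟨by omega, by omega⟩
        · rw [if_neg (ne_of_gt h), if_neg (not_lt.mpr h.le), if_neg]
          intro hle
          have hrs' : lam r ≤ lam s := hmono h.le
          exact hrange ⟨by omega, by omega⟩
    ext i j
    obtain ⟨r, p, hp, hip⟩ := exists_block' lam hn i
    obtain ⟨s, q, hq, hjq⟩ := exists_block' lam hn j
    have hi : i = blockIdx lam hn r p hp := Fin.ext hip
    have hj : j = blockIdx lam hn s q hq := Fin.ext hjq
    rw [hi, hj, entry_eq_rec lam hn A r s p q hp hq, Matrix.zero_apply]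
    rw [hform r s (p + 1) q, hform r s p (q + 1)]
    rw [show p + 1 + q = p + q + 1 from by omega, show p + (q + 1) = p + q + 1 from by omega]
    rcases lt_trichotomy r s with h | h | h
    · rw [if_neg (ne_of_lt h), if_neg (ne_of_lt h), if_pos h, if_pos h]
      by_cases hle : p + q + 1 + 1 ≤ lam s
      · rw [if_pos hle, if_pos hle, pow_succ]
        ring
      · rw [if_neg hle, if_neg hle]
        simp
    · subst h
      rw [if_pos rfl, if_pos rfl]
      by_cases hcc : Even (p + q + 1) ∧ p + q + 1 + 1 ≤ lam r
      · rw [if_pos hcc, if_pos hcc, pow_succ]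
        ring
      · rw [if_neg hcc, if_neg hcc]
        simp
    · rw [if_neg (ne_of_gt h), if_neg (ne_of_gt h), if_neg (not_lt.mpr h.le),
        if_neg (not_lt.mpr h.le)]
      by_cases hle : p + q + 1 + 1 ≤ lam r
      · rw [if_pos hle, if_pos hle, pow_succ]
        ring
      · rw [if_neg hle, if_neg hle]
        simp
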